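/- For a nonzero real binary quartic Q, the following are equivalent: (i) the covariant L_Q := I(Q)·H_Q − 6·J(Q)·Q vanishes identically, H_Q is not identically zero, and (I(Q), J(Q)) ≠ (0,0); (ii) Q has exactly two non-proportional linear factors over ℂ, each of multiplicity two; equivalently Q = c·R² for some c ≠ 0 and a real quadratic form R with nonzero discriminant. Moreover, in this case the two double factors are a complex-conjugate pair if and only if H_Q(v) ≥ 0 for all v ∈ ℝ², and both are real if and only if H_Q(v) ≤ 0 for all v ∈ ℝ². -/

import Mathlib

/-- The real binary quartic `Q(X,Y) = aX⁴ + bX³Y + cX²Y² + dXY³ + eY⁴` as a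
function of two real variables. -/
def Qf (a b c d e : ℝ) : ℝ → ℝ → ℝ := fun X Y =>
  a * X ^ 4 + b * X ^ 3 * Y + c * X ^ 2 * Y ^ 2 + d * X * Y ^ 3 + e * Y ^ 4

/-- The Hessian covariant `H_Q = Q_XX·Q_YY − (Q_XY)²` of the binary quartic. -/
noncomputable def HessQ (a b c d e : ℝ) (X Y : ℝ) : ℝ :=
  deriv (fun x => deriv (fun x' => Qf a b c d e x' Y) x) X *
    deriv (fun y => deriv (fun y' => Qf a b c d e X y') y) Y -
  (deriv (fun y => deriv (fun x => Qf a b c d e x y) X) Y) ^ 2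

/-- The fundamental invariant `I = 12ae − 3bd + c²` of a real binary quartic. -/
def Iinv (a b c d e : ℝ) : ℝ := 12 * a * e - 3 * b * d + c ^ 2

/-- The fundamental invariant `J = 72aec − 27ad² − 27b²e + 9bcd − 2c³`. -/
def Jinv (a b c d e : ℝ) : ℝ :=
  72 * a * e * c - 27 * a * d ^ 2 - 27 * b ^ 2 * e + 9 * b * c * d - 2 * c ^ 3

/-- The covariant `L_Q = I(Q)·H_Q − 6·J(Q)·Q`. -/
noncomputable def LQ (a b c d e : ℝ) (X Y : ℝ) : ℝ :=
  Iinv a b c d e * HessQ a b c d e X Y - 6 * Jinv a b c d e * Qf a b c d e X Y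

lemma quartic_coeffs {p q r s t : ℝ}
    (h : ∀ X Y : ℝ, p*X^4 + q*X^3*Y + r*X^2*Y^2 + s*X*Y^3 + t*Y^4 = 0) :
    p = 0 ∧ q = 0 ∧ r = 0 ∧ s = 0 ∧ t = 0 := by
  have h10 := h 1 0
  have h01 := h 0 1
  have h11 := h 1 1
  have h1m := h 1 (-1)
  have h21 := h 2 1
  norm_num at h10 h01 h11 h1m h21
  refine ⟨by linarith, by linarith, by linarith, by linarith, by linarith⟩

lemma hasDerivAt_Qx (a b c d e Y x : ℝ) :
    HasDerivAt (fun x' => Qf a b c d e x' Y)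
      (4*a*x^3 + 3*b*x^2*Y + 2*c*x*Y^2 + d*Y^3) x := by
  have h1 := (hasDerivAt_pow 4 x).const_mul a
  have h2 := ((hasDerivAt_pow 3 x).const_mul b).mul_const Y
  have h3 := ((hasDerivAt_pow 2 x).const_mul c).mul_const (Y^2)
  have h4 := ((hasDerivAt_id x).const_mul d).mul_const (Y^3)
  have h5 := hasDerivAt_const x (e*Y^4)
  have h := (((h1.add h2).add h3).add h4).add h5
  exact h.congr_deriv (by push_cast; ring)

lemma hasDerivAt_Qy (a b c d e X y : ℝ) :
    HasDerivAt (fun y' => Qf a b c d e X y')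
      (b*X^3 + 2*c*X^2*y + 3*d*X*y^2 + 4*e*y^3) y := by
  have h1 := hasDerivAt_const y (a*X^4)
  have h2 := (hasDerivAt_id y).const_mul (b*X^3)
  have h3 := ((hasDerivAt_pow 2 y).const_mul (c*X^2))
  have h4 := ((hasDerivAt_pow 3 y).const_mul (d*X))
  have h5 := ((hasDerivAt_pow 4 y).const_mul e)
  have h := (((h1.add h2).add h3).add h4).add h5
  exact h.congr_deriv (by push_cast; ring)

lemma hess_eval (a b c d e X Y : ℝ) :
    HessQ a b c d e X Y =
      (24*a*c - 9*b^2)*X^4 + (72*a*d - 12*b*c)*X^3*Y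
        + (144*a*e + 18*b*d - 12*c^2)*X^2*Y^2
        + (72*b*e - 12*c*d)*X*Y^3 + (24*c*e - 9*d^2)*Y^4 := by
  have ex : (fun x => deriv (fun x' => Qf a b c d e x' Y) x)
      = fun x => 4*a*x^3 + 3*b*x^2*Y + 2*c*x*Y^2 + d*Y^3 := by
    funext x; exact (hasDerivAt_Qx a b c d e Y x).deriv
  have ey : (fun y => deriv (fun y' => Qf a b c d e X y') y)
      = fun y => b*X^3 + 2*c*X^2*y + 3*d*X*y^2 + 4*e*y^3 := by
    funext y; exact (hasDerivAt_Qy a b c d e X y).deriv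
  have em : (fun y => deriv (fun x => Qf a b c d e x y) X)
      = fun y => 4*a*X^3 + 3*b*X^2*y + 2*c*X*y^2 + d*y^3 := by
    funext y; exact (hasDerivAt_Qx a b c d e y X).deriv
  have hxx : deriv (fun x => 4*a*x^3 + 3*b*x^2*Y + 2*c*x*Y^2 + d*Y^3) X
      = 12*a*X^2 + 6*b*X*Y + 2*c*Y^2 := by
    have h1 := (hasDerivAt_pow 3 X).const_mul (4*a)
    have h2 := ((hasDerivAt_pow 2 X).const_mul (3*b)).mul_const Y
    have h3 := (((hasDerivAt_id X).const_mul (2*c)).mul_const (Y^2))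
    have h4 := hasDerivAt_const X (d*Y^3)
    have h := ((h1.add h2).add h3).add h4
    have h' : HasDerivAt (fun x : ℝ => 4*a*x^3 + 3*b*x^2*Y + 2*c*x*Y^2 + d*Y^3)
        (12*a*X^2 + 6*b*X*Y + 2*c*Y^2) X := by
      exact h.congr_deriv (by push_cast; ring)
    exact h'.deriv
  have hyy : deriv (fun y => b*X^3 + 2*c*X^2*y + 3*d*X*y^2 + 4*e*y^3) Y
      = 2*c*X^2 + 6*d*X*Y + 12*e*Y^2 := by
    have h1 := hasDerivAt_const Y (b*X^3)
    have h2 := (hasDerivAt_id Y).const_mul (2*c*X^2)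
    have h3 := (hasDerivAt_pow 2 Y).const_mul (3*d*X)
    have h4 := (hasDerivAt_pow 3 Y).const_mul (4*e)
    have h := ((h1.add h2).add h3).add h4
    have h' : HasDerivAt (fun y : ℝ => b*X^3 + 2*c*X^2*y + 3*d*X*y^2 + 4*e*y^3)
        (2*c*X^2 + 6*d*X*Y + 12*e*Y^2) Y := by
      exact h.congr_deriv (by push_cast; ring)
    exact h'.deriv
  have hxy : deriv (fun y => 4*a*X^3 + 3*b*X^2*y + 2*c*X*y^2 + d*y^3) Y
      = 3*b*X^2 + 4*c*X*Y + 3*d*Y^2 := by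
    have h1 := hasDerivAt_const Y (4*a*X^3)
    have h2 := (hasDerivAt_id Y).const_mul (3*b*X^2)
    have h3 := (hasDerivAt_pow 2 Y).const_mul (2*c*X)
    have h4 := (hasDerivAt_pow 3 Y).const_mul d
    have h := ((h1.add h2).add h3).add h4
    have h' : HasDerivAt (fun y : ℝ => 4*a*X^3 + 3*b*X^2*y + 2*c*X*y^2 + d*y^3)
        (3*b*X^2 + 4*c*X*Y + 3*d*Y^2) Y := by
      exact h.congr_deriv (by push_cast; ring)
    exact h'.deriv
  rw [HessQ, ex, ey, em, hxx, hyy, hxy]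
  ring


lemma coeffs_of_sq {a b c d e c0 A B C : ℝ}
    (h : ∀ X Y : ℝ, Qf a b c d e X Y = c0*(A*X^2 + B*X*Y + C*Y^2)^2) :
    a = c0*A^2 ∧ b = 2*c0*A*B ∧ c = c0*(B^2 + 2*A*C) ∧ d = 2*c0*B*C ∧ e = c0*C^2 := by
  have h' : ∀ X Y : ℝ, (a - c0*A^2)*X^4 + (b - 2*c0*A*B)*X^3*Y
      + (c - c0*(B^2 + 2*A*C))*X^2*Y^2 + (d - 2*c0*B*C)*X*Y^3 + (e - c0*C^2)*Y^4 = 0 := by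
    intro X Y
    have hx := h X Y
    simp only [Qf] at hx
    linear_combination hx
  obtain ⟨h1, h2, h3, h4, h5⟩ := quartic_coeffs h'
  exact ⟨by linarith, by linarith, by linarith, by linarith, by linarith⟩

lemma hess_of_sq {a b c d e c0 A B C : ℝ}
    (h : ∀ X Y : ℝ, Qf a b c d e X Y = c0*(A*X^2 + B*X*Y + C*Y^2)^2) :
    ∀ X Y : ℝ, HessQ a b c d e X Y
      = -12*c0^2*(B^2 - 4*A*C)*(A*X^2 + B*X*Y + C*Y^2)^2 := by
  obtain ⟨h1, h2, h3, h4, h5⟩ := coeffs_of_sq h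
  intro X Y
  rw [hess_eval, h1, h2, h3, h4, h5]
  ring

lemma exists_ne_zero {A B C : ℝ} (h : B^2 - 4*A*C ≠ 0) :
    ∃ X Y : ℝ, A*X^2 + B*X*Y + C*Y^2 ≠ 0 := by
  by_cases hA : A = 0
  · by_cases hC : C = 0
    · have hB : B ≠ 0 := by
        intro hB
        exact h (by rw [hA, hB, hC]; ring)
      exact ⟨1, 1, fun h0 => hB (by linear_combination h0 - hA - hC)⟩
    · exact ⟨0, 1, fun h0 => hC (by linear_combination h0)⟩
  · exact ⟨1, 0, fun h0 => hA (by linear_combination h0)⟩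
/-- For a nonzero real binary quartic `Q`: the covariant `L_Q` vanishes
identically with `H_Q ≢ 0` and `(I,J) ≠ (0,0)` iff `Q = c·R²` for a real
quadratic form `R` with nonzero discriminant (two non-proportional double
linear factors). Moreover, in this case the double factors are a
complex-conjugate pair iff `H_Q ≥ 0` everywhere, and both real iff `H_Q ≤ 0`
everywhere. -/
theorem L_zero_iff_square_of_quadratic
    (a b c d e : ℝ) (hQ : ¬(a = 0 ∧ b = 0 ∧ c = 0 ∧ d = 0 ∧ e = 0)) :
    (((∀ X Y : ℝ, LQ a b c d e X Y = 0) ∧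
        (¬ ∀ X Y : ℝ, HessQ a b c d e X Y = 0) ∧
        ¬(Iinv a b c d e = 0 ∧ Jinv a b c d e = 0)) ↔
      (∃ c0 A B C : ℝ, c0 ≠ 0 ∧ B ^ 2 - 4 * A * C ≠ 0 ∧
        ∀ X Y : ℝ, Qf a b c d e X Y =
          c0 * (A * X ^ 2 + B * X * Y + C * Y ^ 2) ^ 2)) ∧
    (∀ c0 A B C : ℝ, c0 ≠ 0 → B ^ 2 - 4 * A * C ≠ 0 →
      (∀ X Y : ℝ, Qf a b c d e X Y =
        c0 * (A * X ^ 2 + B * X * Y + C * Y ^ 2) ^ 2) →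
      ((B ^ 2 - 4 * A * C < 0 ↔ ∀ X Y : ℝ, 0 ≤ HessQ a b c d e X Y) ∧
       (0 < B ^ 2 - 4 * A * C ↔ ∀ X Y : ℝ, HessQ a b c d e X Y ≤ 0))) := by
  constructor
  · constructor
    · rintro ⟨hL, hH, hIJ⟩
      -- Step 1: I ≠ 0
      have hI : Iinv a b c d e ≠ 0 := by
        intro hI0
        have hJ : Jinv a b c d e ≠ 0 := fun hJ0 => hIJ ⟨hI0, hJ0⟩
        have hq0 : ∀ X Y : ℝ, Qf a b c d e X Y = 0 := by
          intro X Y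
          have hx := hL X Y
          simp only [LQ, hI0] at hx
          have h6 : Jinv a b c d e * Qf a b c d e X Y = 0 := by
            linear_combination (-1/6 : ℝ) * hx
          exact (mul_eq_zero.mp h6).resolve_left hJ
        simp only [Qf] at hq0
        exact hQ (quartic_coeffs hq0)
      -- Step 2: J ≠ 0
      have hJ : Jinv a b c d e ≠ 0 := by
        intro hJ0
        apply hH
        intro X Y
        have hx := hL X Y
        simp only [LQ, hJ0] at hx
        have h6 : Iinv a b c d e * HessQ a b c d e X Y = 0 := by
          linear_combination hx
        exact (mul_eq_zero.mp h6).resolve_left hI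
      -- Step 3: coefficient equations
      have hco : ∀ X Y : ℝ,
          (Iinv a b c d e * (24*a*c - 9*b^2) - 6*Jinv a b c d e * a)*X^4
          + (Iinv a b c d e * (72*a*d - 12*b*c) - 6*Jinv a b c d e * b)*X^3*Y
          + (Iinv a b c d e * (144*a*e + 18*b*d - 12*c^2) - 6*Jinv a b c d e * c)*X^2*Y^2
          + (Iinv a b c d e * (72*b*e - 12*c*d) - 6*Jinv a b c d e * d)*X*Y^3
          + (Iinv a b c d e * (24*c*e - 9*d^2) - 6*Jinv a b c d e * e)*Y^4 = 0 := by
        intro X Y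
        have hx := hL X Y
        simp only [LQ] at hx
        rw [hess_eval] at hx
        simp only [Qf] at hx
        linear_combination hx
      obtain ⟨E1, E2, E3, E4, E5⟩ := quartic_coeffs hco
      by_cases ha : a = 0
      · subst ha
        -- b = 0
        have h9 : Iinv 0 b c d e * (9*b^2) = 0 := by linear_combination -E1
        have hb : b = 0 := by
          have := (mul_eq_zero.mp h9).resolve_left hI
          have hb2 : b^2 = 0 := by linarith
          exact pow_eq_zero_iff two_ne_zero |>.mp hb2
        subst hb
        by_cases hc : c = 0
        · subst hc
          have hd : d = 0 := by
            have h6 : Jinv 0 0 0 d e * d = 0 := by linear_combination (-1/6 : ℝ) * E4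
            exact (mul_eq_zero.mp h6).resolve_left hJ
          subst hd
          exact absurd (fun X Y => by rw [hess_eval]; ring) hH
        · have h9c : Iinv 0 0 c d e * (9*c*(4*c*e - d^2)) = 0 := by
            linear_combination c*E5 - e*E3
          have hce : 4*c*e - d^2 = 0 := by
            have h1 := (mul_eq_zero.mp h9c).resolve_left hI
            have h2 := (mul_eq_zero.mp h1).resolve_left
              (mul_ne_zero (by norm_num) hc)
            exact h2
          refine ⟨c, 0, 1, d/(2*c), hc, by norm_num, ?_⟩
          intro X Y
          simp only [Qf]
          field_simp
          linear_combination Y^4*hce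
      · -- a ≠ 0
        have h9 : Iinv a b c d e * (9*(8*a^2*d - 4*a*b*c + b^3)) = 0 := by
          linear_combination a*E2 - b*E1
        have hT1 : 8*a^2*d - 4*a*b*c + b^3 = 0 := by
          have := (mul_eq_zero.mp h9).resolve_left hI
          linarith
        have h9' : Iinv a b c d e * (9*(16*a^2*e + 2*a*b*d - 4*a*c^2 + b^2*c)) = 0 := by
          linear_combination a*E3 - c*E1
        have hT2' : 16*a^2*e + 2*a*b*d - 4*a*c^2 + b^2*c = 0 := by
          have := (mul_eq_zero.mp h9').resolve_left hI
          linarith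
        have hT2 : 64*a^3*e = (4*a*c - b^2)^2 := by
          linear_combination 4*a*hT2' - b*hT1
        have hkey : 16*a^2*(12*a*e - 3*b*d + c^2) = (8*a*c - 3*b^2)^2 := by
          linear_combination 3*hT2 - 6*b*hT1
        refine ⟨a, 1, b/(2*a), (4*a*c - b^2)/(8*a^2), ha, ?_, ?_⟩
        · intro h0
          apply hI
          have h3b : 3*b^2 - 8*a*c = 0 := by
            field_simp at h0
            have h8 : (8*a^2) * (3*b^2 - 8*a*c) = 0 := by linear_combination a^2 * h0
            exact (mul_eq_zero.mp h8).resolve_left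
              (mul_ne_zero (by norm_num) (pow_ne_zero 2 ha))
          have h4 : 16*a^2*(12*a*e - 3*b*d + c^2) = 0 := by
            linear_combination hkey - (8*a*c - 3*b^2)*h3b
          have h5 : (12*a*e - 3*b*d + c^2) = 0 := by
            rcases mul_eq_zero.mp h4 with h | h
            · exact absurd h (by positivity)
            · exact h
          simp only [Iinv]
          exact h5
        · have hd' : d = b*(4*a*c - b^2)/(8*a^2) := by
            rw [eq_div_iff (mul_ne_zero (by norm_num : (8:ℝ) ≠ 0) (pow_ne_zero 2 ha))]
            linear_combination hT1
          have he' : e = (4*a*c - b^2)^2/(64*a^3) := by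
            rw [eq_div_iff (mul_ne_zero (by norm_num : (64:ℝ) ≠ 0) (pow_ne_zero 3 ha))]
            linear_combination hT2
          intro X Y
          simp only [Qf]
          rw [hd', he']
          field_simp
          ring
    · rintro ⟨c0, A, B, C, hc0, hD, hq⟩
      obtain ⟨ha, hb, hc, hd, he⟩ := coeffs_of_sq hq
      have hHs := hess_of_sq hq
      refine ⟨?_, ?_, ?_⟩
      · intro X Y
        simp only [LQ, Iinv, Jinv, Qf]
        rw [hHs X Y, ha, hb, hc, hd, he]
        ring
      · intro hH0
        obtain ⟨X, Y, hR⟩ := exists_ne_zero hD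
        have hx := hH0 X Y
        rw [hHs X Y] at hx
        have hlf : -12*c0^2*(B^2 - 4*A*C) ≠ 0 :=
          mul_ne_zero (mul_ne_zero (by norm_num) (pow_ne_zero 2 hc0)) hD
        have := (mul_eq_zero.mp hx).resolve_left hlf
        exact pow_ne_zero 2 hR this
      · rintro ⟨hI0, -⟩
        have hIval : Iinv a b c d e = c0^2*(B^2 - 4*A*C)^2 := by
          simp only [Iinv]
          rw [ha, hb, hc, hd, he]
          ring
        rw [hIval] at hI0
        rcases mul_eq_zero.mp hI0 with h | h
        · exact pow_ne_zero 2 hc0 h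
        · exact pow_ne_zero 2 hD h
  · rintro c0 A B C hc0 hD hq
    have hHs := hess_of_sq hq
    obtain ⟨X0, Y0, hR0⟩ := exists_ne_zero hD
    have hR2 : 0 < (A*X0^2 + B*X0*Y0 + C*Y0^2)^2 :=
      lt_of_le_of_ne (sq_nonneg _) (Ne.symm (pow_ne_zero 2 hR0))
    have hc2 : 0 < c0^2 := lt_of_le_of_ne (sq_nonneg _) (Ne.symm (pow_ne_zero 2 hc0))
    constructor
    · constructor
      · intro hDn X Y
        rw [hHs X Y]
        nlinarith [sq_nonneg (A*X^2 + B*X*Y + C*Y^2), sq_nonneg c0,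
          mul_nonneg (sq_nonneg c0) (sq_nonneg (A*X^2 + B*X*Y + C*Y^2))]
      · intro hpos
        rcases lt_or_gt_of_ne hD with h | h
        · exact h
        · exfalso
          have hx := hpos X0 Y0
          rw [hHs X0 Y0] at hx
          nlinarith [mul_pos (mul_pos h hc2) hR2]
    · constructor
      · intro hDp X Y
        rw [hHs X Y]
        nlinarith [mul_nonneg (sq_nonneg c0) (sq_nonneg (A*X^2 + B*X*Y + C*Y^2))]
      · intro hneg
        rcases lt_or_gt_of_ne hD with h | h
        · exfalso
          have hx := hneg X0 Y0
          rw [hHs X0 Y0] at hx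
          nlinarith [mul_pos (mul_pos (neg_pos.mpr h) hc2) hR2]
        · exact h
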